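/- For n ≥ 2, the polynomials α_n satisfy the differential recurrence α_n(t,q) = ((n−2)tq + (n−1)t + 2q + 1)·α_{n−1}(t,q) + (t − t²)(q+1)·∂α_{n−1}/∂t + (1−t)(q² + q)·∂α_{n−1}/∂q. -/

import Mathlib

open Finset

/-- A segmented permutation of size `n`: a permutation of `Fin n` together with a
set of barred gaps among the `n-1` gaps between consecutive positions. -/
abbrev SegPerm (n : ℕ) := Equiv.Perm (Fin n) × Finset (Fin (n - 1))

/-- The left endpoint of gap `i`, as an element of `Fin n`. -/
def gapL {n : ℕ} (i : Fin (n - 1)) : Fin n := ⟨i.1, by have := i.2; omega⟩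

/-- The right endpoint of gap `i`, as an element of `Fin n`. -/
def gapR {n : ℕ} (i : Fin (n - 1)) : Fin n := ⟨i.1 + 1, by have := i.2; omega⟩

/-- Number of descents of a segmented permutation: gaps that are not barred and
where the value decreases. -/
def desNum {n : ℕ} (π : SegPerm n) : ℕ :=
  (univ.filter (fun i : Fin (n - 1) => i ∉ π.2 ∧ π.1 (gapR i) < π.1 (gapL i))).card

/-- Number of bars of a segmented permutation. -/
def segNum {n : ℕ} (π : SegPerm n) : ℕ := π.2.card

/-- Number of descents of an ordinary permutation. -/
def permDes {n : ℕ} (σ : Equiv.Perm (Fin n)) : ℕ :=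
  (univ.filter (fun i : Fin (n - 1) => σ (gapR i) < σ (gapL i))).card

/-- The Eulerian number `A(n,k)`. -/
def eulerian (n k : ℕ) : ℕ :=
  ((univ : Finset (Equiv.Perm (Fin n))).filter (fun σ => permDes σ = k)).card

/-- `K(n,i,j)`: number of segmented permutations of size `n` with `i` descents
and `j` bars. -/
def Knum (n i j : ℕ) : ℕ :=
  ((univ : Finset (SegPerm n)).filter (fun π => desNum π = i ∧ segNum π = j)).card

/-- `K(n,i,j)` with integer indices; it vanishes for negative indices. -/
def Kint (n : ℕ) (i j : ℤ) : ℤ :=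
  (((univ : Finset (SegPerm n)).filter
      (fun π => (desNum π : ℤ) = i ∧ (segNum π : ℤ) = j)).card : ℤ)

/-- `T(n,k)`: number of segmented permutations of size `n` with `k` descents. -/
def Tnum (n k : ℕ) : ℕ :=
  ((univ : Finset (SegPerm n)).filter (fun π => desNum π = k)).card

/-- `T(n,k)` with an integer index; it vanishes for negative indices. -/
def Tint (n : ℕ) (k : ℤ) : ℤ :=
  (((univ : Finset (SegPerm n)).filter (fun π => (desNum π : ℤ) = k)).card : ℤ)

/-- Stirling numbers of the second kind. -/
def stirling : ℕ → ℕ → ℕ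
  | 0, 0 => 1
  | 0, _ + 1 => 0
  | _ + 1, 0 => 0
  | n + 1, k + 1 => (k + 1) * stirling n (k + 1) + stirling n k

/-- The generalized Eulerian polynomial `α_n(t,q)`, as a function of real arguments. -/
noncomputable def alphaF (n : ℕ) (t q : ℝ) : ℝ :=
  ∑ π : SegPerm n, t ^ desNum π * q ^ segNum π


lemma prod_ite_one_pow {α : Type*} (s : Finset α) (P : α → Prop) [DecidablePred P] (t : ℝ) :
    ∏ i ∈ s, (if P i then t else 1) = t ^ (s.filter P).card := by
  rw [Finset.prod_ite, Finset.prod_const, Finset.prod_const, one_pow, mul_one]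

lemma permDes_le {k : ℕ} (σ : Equiv.Perm (Fin k)) : permDes σ ≤ k - 1 := by
  classical
  calc permDes σ ≤ (univ : Finset (Fin (k-1))).card := Finset.card_filter_le _ _
  _ = k - 1 := by simp

lemma alpha_eq (k : ℕ) (t q : ℝ) :
    alphaF k t q = ∑ σ : Equiv.Perm (Fin k),
      (t + q) ^ permDes σ * (1 + q) ^ (k - 1 - permDes σ) := by
  classical
  rw [alphaF, Fintype.sum_prod_type]
  refine Finset.sum_congr rfl (fun σ _ => ?_)
  have h1 : ∏ i : Fin (k-1), (q + if σ (gapR i) < σ (gapL i) then t else 1)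
      = ∑ S ∈ (univ : Finset (Fin (k-1))).powerset,
          (∏ _i ∈ S, q) * ∏ i ∈ univ \ S, (if σ (gapR i) < σ (gapL i) then t else 1) :=
    Finset.prod_add _ _ _
  have h2 : ∀ S : Finset (Fin (k-1)),
      t ^ desNum (σ, S) * q ^ segNum (σ, S)
        = (∏ _i ∈ S, q) * ∏ i ∈ univ \ S, (if σ (gapR i) < σ (gapL i) then t else 1) := by
    intro S
    rw [prod_ite_one_pow, Finset.prod_const]
    have hc : ((univ \ S).filter (fun i => σ (gapR i) < σ (gapL i))).card = desNum (σ, S) := by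
      unfold desNum
      congr 1
      ext i
      simp [Finset.mem_sdiff, and_comm]
    rw [hc, segNum, mul_comm]
  have h3 : ∏ i : Fin (k-1), (q + if σ (gapR i) < σ (gapL i) then t else 1)
      = (t + q) ^ permDes σ * (1 + q) ^ (k - 1 - permDes σ) := by
    simp only [apply_ite (fun x => q + x)]
    rw [Finset.prod_ite (f := fun _ => q + t) (g := fun _ => q + 1),
      Finset.prod_const, Finset.prod_const]
    have hneg : (univ.filter (fun i : Fin (k-1) => ¬ σ (gapR i) < σ (gapL i))).card
        = k - 1 - permDes σ := by
      have := Finset.card_filter_add_card_filter_not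
        (s := (univ : Finset (Fin (k-1)))) (p := fun i => σ (gapR i) < σ (gapL i))
      simp only [Finset.card_univ, Fintype.card_fin] at this
      unfold permDes
      omega
    rw [hneg, show (univ.filter (fun i : Fin (k-1) => σ (gapR i) < σ (gapL i))).card
        = permDes σ from rfl, add_comm q t, add_comm q 1]
  calc (∑ S : Finset (Fin (k-1)), t ^ desNum (σ, S) * q ^ segNum (σ, S))
      = ∑ S ∈ (univ : Finset (Fin (k-1))).powerset,
          (∏ _i ∈ S, q) * ∏ i ∈ univ \ S, (if σ (gapR i) < σ (gapL i) then t else 1) := by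
        rw [Finset.powerset_univ]
        exact Finset.sum_congr rfl (fun S _ => h2 S)
  _ = (t + q) ^ permDes σ * (1 + q) ^ (k - 1 - permDes σ) := by rw [← h1, h3]

/-- Insert the largest value at position `p`. -/
def insVal (m : ℕ) (p : Fin (m+1)) (σ : Equiv.Perm (Fin m)) (j : Fin (m+1)) : Fin (m+1) :=
  if h : j.1 < p.1 then (σ ⟨j.1, by have := p.2; omega⟩).castSucc
  else if h2 : p.1 < j.1 then (σ ⟨j.1 - 1, by have := j.2; omega⟩).castSucc
  else Fin.last m

lemma insVal_lt {m : ℕ} {p j : Fin (m+1)} (σ : Equiv.Perm (Fin m)) (hj : j.1 < p.1) :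
    insVal m p σ j = (σ ⟨j.1, by have := p.2; omega⟩).castSucc := by
  unfold insVal; rw [dif_pos hj]

lemma insVal_gt {m : ℕ} {p j : Fin (m+1)} (σ : Equiv.Perm (Fin m)) (hj : p.1 < j.1) :
    insVal m p σ j = (σ ⟨j.1 - 1, by have := j.2; omega⟩).castSucc := by
  unfold insVal; rw [dif_neg (by omega), dif_pos hj]

lemma insVal_self {m : ℕ} (p : Fin (m+1)) (σ : Equiv.Perm (Fin m)) :
    insVal m p σ p = Fin.last m := by
  unfold insVal; rw [dif_neg (by omega), dif_neg (by omega)]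

lemma insVal_ne_last {m : ℕ} {p j : Fin (m+1)} (σ : Equiv.Perm (Fin m)) (hj : j ≠ p) :
    insVal m p σ j ≠ Fin.last m := by
  have hj' : j.1 ≠ p.1 := fun h => hj (Fin.ext h)
  rcases lt_or_gt_of_ne hj' with h | h
  · rw [insVal_lt σ h]; exact (Fin.castSucc_lt_last _).ne
  · rw [insVal_gt σ h]; exact (Fin.castSucc_lt_last _).ne

lemma insVal_inj {m : ℕ} (p : Fin (m+1)) (σ : Equiv.Perm (Fin m)) :
    Function.Injective (insVal m p σ) := by
  intro j1 j2 h
  by_cases h1 : j1 = p <;> by_cases h2 : j2 = p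
  · rw [h1, h2]
  · subst h1
    exact absurd (h.symm.trans (insVal_self _ σ)) (insVal_ne_last σ h2)
  · subst h2
    exact absurd (h.trans (insVal_self _ σ)) (insVal_ne_last σ h1)
  · have h1' : j1.1 ≠ p.1 := fun hh => h1 (Fin.ext hh)
    have h2' : j2.1 ≠ p.1 := fun hh => h2 (Fin.ext hh)
    have key : ∀ x : Fin m, ∀ y : Fin m, (σ x).castSucc = (σ y).castSucc → x.1 = y.1 := by
      intro x y hxy
      have := σ.injective (Fin.castSucc_injective _ hxy)
      exact congrArg Fin.val this
    rcases lt_or_gt_of_ne h1' with ha | ha <;> rcases lt_or_gt_of_ne h2' with hb | hb <;>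
      [ (rw [insVal_lt σ ha, insVal_lt σ hb] at h);
        (rw [insVal_lt σ ha, insVal_gt σ hb] at h);
        (rw [insVal_gt σ ha, insVal_lt σ hb] at h);
        (rw [insVal_gt σ ha, insVal_gt σ hb] at h) ] <;>
      · have := key _ _ h
        simp only [] at this
        ext
        omega

/-- The inserted permutation. -/
noncomputable def insPerm (m : ℕ) (p : Fin (m+1)) (σ : Equiv.Perm (Fin m)) :
    Equiv.Perm (Fin (m+1)) :=
  Equiv.ofBijective _ ((Finite.injective_iff_bijective).mp (insVal_inj p σ))

lemma insPerm_apply (m : ℕ) (p : Fin (m+1)) (σ : Equiv.Perm (Fin m)) (j : Fin (m+1)) :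
    insPerm m p σ j = insVal m p σ j := rfl

lemma insPerm_bijective (m : ℕ) :
    Function.Bijective (fun x : Fin (m+1) × Equiv.Perm (Fin m) => insPerm m x.1 x.2) := by
  rw [Fintype.bijective_iff_injective_and_card]
  constructor
  · rintro ⟨p, σ⟩ ⟨p', σ'⟩ h
    simp only [Prod.mk.injEq]
    have hfun : ∀ j, insVal m p σ j = insVal m p' σ' j := by
      intro j
      have := congrArg (fun e : Equiv.Perm (Fin (m+1)) => e j) h
      simpa [insPerm_apply] using this
    have hp : p = p' := by
      by_contra hne
      exact insVal_ne_last σ' hne ((hfun p).symm.trans (insVal_self p σ))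
    subst hp
    refine ⟨rfl, ?_⟩
    ext j
    have hpos : ∀ j : Fin m, ∀ τ : Equiv.Perm (Fin m),
        insVal m p τ (if j.1 < p.1 then j.castSucc else j.succ) = (τ j).castSucc := by
      intro j τ
      by_cases hj : j.1 < p.1
      · rw [if_pos hj, insVal_lt τ (by simpa using hj)]
        exact congrArg (fun x => (τ x).castSucc) (Fin.ext (by simp))
      · rw [if_neg hj, insVal_gt τ (by simp; omega)]
        exact congrArg (fun x => (τ x).castSucc) (Fin.ext (by simp))
    have := (hpos j σ).symm.trans ((hfun _).trans (hpos j σ'))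
    have := Fin.castSucc_injective _ this
    exact congrArg Fin.val this
  · simp [Fintype.card_perm, Fintype.card_fin, Nat.factorial_succ]

/-- Descent indicator at nat index. -/
def dsc {N : ℕ} (τ : Equiv.Perm (Fin N)) (k : ℕ) : ℕ :=
  if h : k + 1 < N then (if τ ⟨k+1, h⟩ < τ ⟨k, by omega⟩ then 1 else 0) else 0

lemma dsc_le_one {N : ℕ} (τ : Equiv.Perm (Fin N)) (k : ℕ) : dsc τ k ≤ 1 := by
  unfold dsc; split_ifs <;> omega

lemma dsc_eq_zero_of_ge {N : ℕ} (τ : Equiv.Perm (Fin N)) {k : ℕ} (hk : N ≤ k + 1) :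
    dsc τ k = 0 := by
  unfold dsc; rw [dif_neg (by omega)]

lemma permDes_eq_sum {N : ℕ} (τ : Equiv.Perm (Fin N)) :
    permDes τ = ∑ k ∈ Finset.range (N - 1), dsc τ k := by
  classical
  rw [permDes, Finset.card_filter]
  rw [← Fin.sum_univ_eq_sum_range (fun k => dsc τ k) (N-1)]
  refine Finset.sum_congr rfl (fun i _ => ?_)
  have hi : i.1 + 1 < N := by have := i.2; omega
  unfold dsc
  rw [dif_pos hi]
  have h1 : gapR i = (⟨i.1+1, hi⟩ : Fin N) := Fin.ext (by simp [gapR])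
  have h2 : gapL i = (⟨i.1, by omega⟩ : Fin N) := Fin.ext (by simp [gapL])
  rw [h1, h2]

lemma insPerm_mk_lt {m : ℕ} {p : Fin (m+1)} (σ : Equiv.Perm (Fin m)) {k : ℕ}
    (hk : k < p.1) (hk' : k < m + 1) :
    insPerm m p σ ⟨k, hk'⟩ = (σ ⟨k, by have := p.2; omega⟩).castSucc := insVal_lt σ hk

lemma insPerm_mk_gt {m : ℕ} {p : Fin (m+1)} (σ : Equiv.Perm (Fin m)) {k : ℕ}
    (hk : p.1 < k) (hk' : k < m + 1) :
    insPerm m p σ ⟨k, hk'⟩ = (σ ⟨k - 1, by omega⟩).castSucc := insVal_gt σ hk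

lemma insPerm_mk_self {m : ℕ} {p : Fin (m+1)} (σ : Equiv.Perm (Fin m)) {k : ℕ}
    (hk : k = p.1) (hk' : k < m + 1) :
    insPerm m p σ ⟨k, hk'⟩ = Fin.last m := by
  have : (⟨k, hk'⟩ : Fin (m+1)) = p := Fin.ext hk
  rw [this, insPerm_apply, insVal_self]

lemma dsc_ins_lt {m : ℕ} {p : Fin (m+1)} (σ : Equiv.Perm (Fin m)) {k : ℕ}
    (hk : k + 1 < p.1) : dsc (insPerm m p σ) k = dsc σ k := by
  have hp := p.2
  have hk1 : k + 1 < m + 1 := by omega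
  have hk2 : k + 1 < m := by omega
  unfold dsc
  rw [dif_pos hk1, dif_pos hk2,
    insPerm_mk_lt σ hk hk1, insPerm_mk_lt σ (by omega) (by omega)]
  simp [Fin.castSucc_lt_castSucc_iff]

lemma dsc_ins_eq' {m : ℕ} {p : Fin (m+1)} (σ : Equiv.Perm (Fin m)) {k : ℕ}
    (hk : k + 1 = p.1) : dsc (insPerm m p σ) k = 0 := by
  have hp := p.2
  have hk1 : k + 1 < m + 1 := by omega
  unfold dsc
  rw [dif_pos hk1, insPerm_mk_self σ hk hk1, insPerm_mk_lt σ (by omega) (by omega)]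
  rw [if_neg (not_lt.mpr (Fin.le_last _))]

lemma dsc_ins_self {m : ℕ} {p : Fin (m+1)} (σ : Equiv.Perm (Fin m)) {k : ℕ}
    (hk : k = p.1) (hkm : k < m) : dsc (insPerm m p σ) k = 1 := by
  have hk1 : k + 1 < m + 1 := by omega
  unfold dsc
  rw [dif_pos hk1, insPerm_mk_gt σ (by omega) hk1, insPerm_mk_self σ hk (by omega)]
  rw [if_pos (Fin.castSucc_lt_last _)]

lemma dsc_ins_gt {m : ℕ} {p : Fin (m+1)} (σ : Equiv.Perm (Fin m)) {k : ℕ}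
    (hk : p.1 < k) (hkm : k < m) : dsc (insPerm m p σ) k = dsc σ (k - 1) := by
  have hk1 : k + 1 < m + 1 := by omega
  unfold dsc
  rw [dif_pos hk1, dif_pos (show k - 1 + 1 < m by omega),
    insPerm_mk_gt σ (by omega) hk1, insPerm_mk_gt σ hk (by omega)]
  have e1 : (⟨k + 1 - 1, by omega⟩ : Fin m) = ⟨k - 1 + 1, by omega⟩ := Fin.ext (by simp only []; omega)
  have e2 : (⟨k - 1, by omega⟩ : Fin m) = (⟨k - 1, by omega⟩ : Fin m) := rfl
  rw [e1]
  simp [Fin.castSucc_lt_castSucc_iff]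

lemma permDes_ins_eq_sum {m : ℕ} (p : Fin (m+1)) (σ : Equiv.Perm (Fin m)) :
    permDes (insPerm m p σ) = ∑ k ∈ Finset.range m, dsc (insPerm m p σ) k := by
  rw [permDes_eq_sum]; norm_num

lemma sum_dsc_eq {m : ℕ} (σ : Equiv.Perm (Fin m)) {a b : ℕ} (h : m - 1 ≤ a) (h2 : a ≤ b) :
    ∑ k ∈ Finset.range a, dsc σ k = ∑ k ∈ Finset.range b, dsc σ k :=
  Finset.sum_subset (Finset.range_subset_range.mpr h2)
    (fun x hx hnx => by
      simp only [Finset.mem_range] at hx hnx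
      exact dsc_eq_zero_of_ge σ (by omega))

lemma des_ins_end {m : ℕ} {p : Fin (m+1)} (σ : Equiv.Perm (Fin m)) (hp : p.1 = m) :
    permDes (insPerm m p σ) = permDes σ := by
  rw [permDes_ins_eq_sum, permDes_eq_sum]
  rw [sum_dsc_eq σ (le_refl (m-1)) (by omega : m - 1 ≤ m)]
  refine Finset.sum_congr rfl (fun k hk => ?_)
  simp only [Finset.mem_range] at hk
  rcases lt_or_eq_of_le (by omega : k + 1 ≤ m) with h | h
  · exact dsc_ins_lt σ (by omega)
  · rw [dsc_ins_eq' σ (by omega), dsc_eq_zero_of_ge σ (by omega)]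

lemma des_ins_zero {m : ℕ} {p : Fin (m+1)} (σ : Equiv.Perm (Fin m)) (hp : p.1 = 0)
    (hm : 1 ≤ m) : permDes (insPerm m p σ) = permDes σ + 1 := by
  obtain ⟨s, rfl⟩ : ∃ s, m = s + 1 := ⟨m - 1, by omega⟩
  rw [permDes_ins_eq_sum, permDes_eq_sum, Finset.sum_range_succ']
  have h0 : dsc (insPerm (s+1) p σ) 0 = 1 := dsc_ins_self σ (by omega) (by omega)
  rw [h0]
  have : ∀ i ∈ Finset.range s, dsc (insPerm (s+1) p σ) (i + 1) = dsc σ i := by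
    intro i hi
    simp only [Finset.mem_range] at hi
    rw [dsc_ins_gt σ (by omega) (by omega)]; norm_num
  rw [Finset.sum_congr rfl this]
  norm_num

lemma des_ins_mid {m : ℕ} {p : Fin (m+1)} (σ : Equiv.Perm (Fin m)) (hp1 : 1 ≤ p.1)
    (hpm : p.1 < m) :
    permDes (insPerm m p σ) + dsc σ (p.1 - 1) = permDes σ + 1 := by
  set τ := insPerm m p σ with hτ
  set pv := p.1 with hpv
  have S1 : permDes τ = (∑ k ∈ Finset.Ico 0 (pv-1), dsc τ k) + dsc τ (pv-1) + dsc τ pv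
      + ∑ k ∈ Finset.Ico (pv+1) m, dsc τ k := by
    rw [permDes_ins_eq_sum, Finset.range_eq_Ico,
      ← Finset.sum_Ico_consecutive (fun k => dsc τ k) (by omega : 0 ≤ pv - 1)
        (by omega : pv - 1 ≤ m),
      Finset.sum_eq_sum_Ico_succ_bot (by omega : pv - 1 < m),
      show pv - 1 + 1 = pv by omega,
      Finset.sum_eq_sum_Ico_succ_bot (by omega : pv < m)]
    ring
  have h1 : dsc τ (pv - 1) = 0 := dsc_ins_eq' σ (by omega)
  have h2 : dsc τ pv = 1 := dsc_ins_self σ rfl hpm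
  have h3 : ∑ k ∈ Finset.Ico 0 (pv-1), dsc τ k = ∑ k ∈ Finset.Ico 0 (pv-1), dsc σ k :=
    Finset.sum_congr rfl (fun k hk => by
      simp only [Finset.mem_Ico] at hk
      exact dsc_ins_lt σ (by omega))
  have h4 : ∑ k ∈ Finset.Ico (pv+1) m, dsc τ k = ∑ k ∈ Finset.Ico pv (m-1), dsc σ k := by
    rw [Finset.sum_Ico_eq_sum_range, Finset.sum_Ico_eq_sum_range]
    rw [show m - (pv+1) = m - 1 - pv by omega]
    refine Finset.sum_congr rfl (fun j hj => ?_)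
    simp only [Finset.mem_range] at hj
    rw [dsc_ins_gt σ (by omega) (by omega), show pv + 1 + j - 1 = pv + j by omega]
  have S2 : permDes σ = (∑ k ∈ Finset.Ico 0 (pv-1), dsc σ k) + dsc σ (pv-1)
      + ∑ k ∈ Finset.Ico pv (m-1), dsc σ k := by
    rw [permDes_eq_sum, Finset.range_eq_Ico,
      ← Finset.sum_Ico_consecutive (fun k => dsc σ k) (by omega : 0 ≤ pv - 1)
        (by omega : pv - 1 ≤ m - 1),
      Finset.sum_eq_sum_Ico_succ_bot (by omega : pv - 1 < m - 1),
      show pv - 1 + 1 = pv by omega]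
    ring
  omega

lemma sum_slots (m : ℕ) (hm : 1 ≤ m) (σ : Equiv.Perm (Fin m)) (f : ℕ → ℝ) :
    ∑ p : Fin (m+1), f (permDes (insPerm m p σ))
      = ((permDes σ : ℝ) + 1) * f (permDes σ)
        + ((m : ℝ) - (permDes σ : ℝ)) * f (permDes σ + 1) := by
  obtain ⟨s, rfl⟩ : ∃ s, m = s + 1 := ⟨m - 1, by omega⟩
  set d := permDes σ with hd
  set F : ℕ → ℝ := fun pv => if h : pv < s + 1 + 1 then f (permDes (insPerm (s+1) ⟨pv, h⟩ σ)) else 0 with hF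
  have step1 : ∑ p : Fin (s+1+1), f (permDes (insPerm (s+1) p σ)) = ∑ pv ∈ Finset.range (s+1+1), F pv := by
    rw [← Fin.sum_univ_eq_sum_range F (s+1+1)]
    refine Finset.sum_congr rfl (fun p _ => ?_)
    rw [hF]
    simp only [p.2, dif_pos, Fin.eta]
  rw [step1, Finset.sum_range_succ, Finset.sum_range_succ']
  have hFtop : F (s+1) = f d := by
    rw [hF]
    simp only [dif_pos (by omega : s + 1 < s + 1 + 1)]
    rw [des_ins_end σ rfl]
  have hF0 : F 0 = f (d + 1) := by
    rw [hF]
    simp only [dif_pos (by omega : 0 < s + 1 + 1)]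
    rw [des_ins_zero σ rfl (by omega)]
  have hFmid : ∀ i ∈ Finset.range s,
      F (i + 1) = (dsc σ i : ℝ) * f d + (1 - (dsc σ i : ℝ)) * f (d + 1) := by
    intro i hi
    simp only [Finset.mem_range] at hi
    rw [hF]
    simp only [dif_pos (by omega : i + 1 < s + 1 + 1)]
    have hmid := des_ins_mid (p := (⟨i+1, by omega⟩ : Fin (s+1+1))) σ (by simp) (by simp; omega)
    simp only [show ((⟨i+1, by omega⟩ : Fin (s+1+1)) : ℕ) - 1 = i from by simp] at hmid
    have := dsc_le_one σ i
    interval_cases h : dsc σ i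
    · simp only [Nat.cast_zero]
      rw [show permDes (insPerm (s+1) ⟨i+1, by omega⟩ σ) = d + 1 by omega]
      ring
    · simp only [Nat.cast_one]
      rw [show permDes (insPerm (s+1) ⟨i+1, by omega⟩ σ) = d by omega]
      ring
  rw [Finset.sum_congr rfl hFmid, hFtop, hF0]
  have hsum : ∑ i ∈ Finset.range s, (dsc σ i : ℝ) = (d : ℝ) := by
    rw [hd, permDes_eq_sum σ, show s + 1 - 1 = s from rfl]
    push_cast
    rfl
  have expand : ∑ i ∈ Finset.range s, ((dsc σ i : ℝ) * f d + (1 - (dsc σ i : ℝ)) * f (d + 1))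
      = (∑ i ∈ Finset.range s, (dsc σ i : ℝ)) * f d
        + ((s : ℝ) - ∑ i ∈ Finset.range s, (dsc σ i : ℝ)) * f (d + 1) := by
    rw [Finset.sum_add_distrib, ← Finset.sum_mul, ← Finset.sum_mul,
      Finset.sum_sub_distrib, Finset.sum_const, Finset.card_range, nsmul_eq_mul, mul_one]
  rw [expand, hsum]
  push_cast
  ring

lemma sum_perm_des (m : ℕ) (hm : 1 ≤ m) (f : ℕ → ℝ) :
    ∑ τ : Equiv.Perm (Fin (m+1)), f (permDes τ)
      = ∑ σ : Equiv.Perm (Fin m),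
          (((permDes σ : ℝ) + 1) * f (permDes σ)
            + ((m : ℝ) - (permDes σ : ℝ)) * f (permDes σ + 1)) := by
  rw [← Fintype.sum_bijective _ (insPerm_bijective m)
    (fun x : Fin (m+1) × Equiv.Perm (Fin m) => f (permDes (insPerm m x.1 x.2)))
    (fun τ => f (permDes τ)) (fun x => rfl)]
  rw [Fintype.sum_prod_type]
  rw [Finset.sum_comm]
  exact Finset.sum_congr rfl (fun σ _ => sum_slots m hm σ f)

lemma deriv_alpha_t (m : ℕ) (t q : ℝ) :
    deriv (fun s => alphaF m s q) t
      = ∑ σ : Equiv.Perm (Fin m),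
          (permDes σ : ℝ) * (t+q)^(permDes σ - 1) * (1+q)^(m-1-permDes σ) := by
  have h : HasDerivAt (fun s => alphaF m s q)
      (∑ σ : Equiv.Perm (Fin m),
        ((permDes σ : ℝ) * (t+q)^(permDes σ - 1) * 1) * (1+q)^(m-1-permDes σ)) t := by
    have hfun : (fun s => alphaF m s q)
        = fun s => ∑ σ : Equiv.Perm (Fin m),
            (s+q)^(permDes σ) * (1+q)^(m-1-permDes σ) :=
      funext (fun s => alpha_eq m s q)
    rw [hfun]
    apply HasDerivAt.fun_sum
    intro σ _
    exact (((hasDerivAt_id t).add_const q).pow (permDes σ)).mul_const _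
  rw [h.deriv]
  exact Finset.sum_congr rfl (fun σ _ => by ring)

lemma deriv_alpha_q (m : ℕ) (t q : ℝ) :
    deriv (fun s => alphaF m t s) q
      = ∑ σ : Equiv.Perm (Fin m),
          ((permDes σ : ℝ) * (t+q)^(permDes σ - 1) * (1+q)^(m-1-permDes σ)
            + ((m-1-permDes σ : ℕ) : ℝ) * (t+q)^(permDes σ) * (1+q)^(m-1-permDes σ-1)) := by
  have h : HasDerivAt (fun s => alphaF m t s)
      (∑ σ : Equiv.Perm (Fin m),
        (((permDes σ : ℝ) * (t+q)^(permDes σ - 1) * 1) * (1+q)^(m-1-permDes σ)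
          + (t+q)^(permDes σ) * (((m-1-permDes σ : ℕ) : ℝ) * (1+q)^(m-1-permDes σ-1) * 1))) q := by
    have hfun : (fun s => alphaF m t s)
        = fun s => ∑ σ : Equiv.Perm (Fin m),
            (t+s)^(permDes σ) * (1+s)^(m-1-permDes σ) :=
      funext (fun s => alpha_eq m t s)
    rw [hfun]
    apply HasDerivAt.fun_sum
    intro σ _
    exact (((hasDerivAt_id q).const_add t).pow (permDes σ)).mul
      (((hasDerivAt_id q).const_add 1).pow (m-1-permDes σ))
  rw [h.deriv]
  exact Finset.sum_congr rfl (fun σ _ => by ring)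

lemma key_id (m d : ℕ) (hm : 1 ≤ m) (hd : d ≤ m - 1) (t q : ℝ) :
    ((d:ℝ)+1) * ((t+q)^d * (1+q)^(m - d)) + ((m:ℝ) - (d:ℝ)) * ((t+q)^(d+1) * (1+q)^(m - (d+1)))
      = (((m:ℝ)+1-2)*t*q + ((m:ℝ)+1-1)*t + 2*q + 1) * ((t+q)^d * (1+q)^(m-1-d))
        + (t - t^2)*(q+1) * ((d:ℝ) * (t+q)^(d-1) * (1+q)^(m-1-d))
        + (1-t)*(q^2+q) * ((d:ℝ) * (t+q)^(d-1) * (1+q)^(m-1-d)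
            + ((m-1-d : ℕ):ℝ) * (t+q)^d * (1+q)^(m-1-d-1)) := by
  obtain ⟨b, rfl⟩ : ∃ b, m = d + 1 + b := ⟨m - 1 - d, by omega⟩
  rw [show d+1+b - d = b+1 by omega, show d+1+b-(d+1) = b by omega,
    show d+1+b-1-d = b by omega]
  rcases d with _ | a <;> rcases b with _ | c
  all_goals try simp only [Nat.zero_sub, Nat.add_sub_cancel, Nat.sub_zero, Nat.sub_self]
  all_goals push_cast
  all_goals ring

/-- the differential recurrence for the polynomials `α_n`. -/
theorem alphaF_diff_rec (n : ℕ) (hn : 2 ≤ n) (t q : ℝ) :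
    alphaF n t q
      = (((n : ℝ) - 2) * t * q + ((n : ℝ) - 1) * t + 2 * q + 1) * alphaF (n - 1) t q
        + (t - t ^ 2) * (q + 1) * deriv (fun s => alphaF (n - 1) s q) t
        + (1 - t) * (q ^ 2 + q) * deriv (fun s => alphaF (n - 1) t s) q := by
  obtain ⟨m, rfl⟩ : ∃ m, n = m + 1 := ⟨n - 1, by omega⟩
  have hm : 1 ≤ m := by omega
  simp only [Nat.add_sub_cancel]
  rw [deriv_alpha_t m t q, deriv_alpha_q m t q, alpha_eq m t q, alpha_eq (m+1) t q]
  simp only [Nat.add_sub_cancel]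
  rw [sum_perm_des m hm (fun k => (t+q)^k * (1+q)^(m-k))]
  rw [Finset.mul_sum, Finset.mul_sum, Finset.mul_sum, ← Finset.sum_add_distrib,
    ← Finset.sum_add_distrib]
  refine Finset.sum_congr rfl (fun σ _ => ?_)
  have := key_id m (permDes σ) hm (permDes_le σ) t q
  push_cast at this ⊢
  convert this using 2 <;> push_cast <;> ring
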